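/- Let R be an associative ring with unity, E a simple left R-module and D a left R-module, and let M = E ⊕ D with E identified with the submodule E ⊕ 0 (the range of the inclusion E → E ⊕ D). Then E is strongly hollow in M if and only if for every submodule A of D, every R-linear map from E to the quotient module D/A is zero (equivalently, E does not belong to the Wisbauer category σ[D]). -/

import Mathlib

/-- Auxiliary lemma: if every map `E → D ⧸ A` is zero and the first projection of `K`
is all of `E`, then `E × 0 ≤ K`. -/
theorem aux_inl_le_of_map_fst_top
    {R : Type*} [Ring R] {E D : Type*}
    [AddCommGroup E] [Module R E]
    [AddCommGroup D] [Module R D]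
    (h : ∀ (A : Submodule R D) (f : E →ₗ[R] D ⧸ A), f = 0)
    (K : Submodule R (E × D))
    (htop : Submodule.map (LinearMap.fst R E D) K = ⊤) :
    LinearMap.range (LinearMap.inl R E D) ≤ K := by
  set A : Submodule R D := Submodule.map (LinearMap.snd R E D)
      (K ⊓ LinearMap.range (LinearMap.inr R E D)) with hA
  let p : K →ₗ[R] E := (LinearMap.fst R E D).comp K.subtype
  have hp : Function.Surjective p := by
    intro e
    have he : e ∈ Submodule.map (LinearMap.fst R E D) K := htop ▸ Submodule.mem_top
    obtain ⟨x, hx, rfl⟩ := he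
    exact ⟨⟨x, hx⟩, rfl⟩
  let g : K →ₗ[R] D ⧸ A := A.mkQ.comp ((LinearMap.snd R E D).comp K.subtype)
  have hker : LinearMap.ker p ≤ LinearMap.ker g := by
    intro k hk
    have h1 : (k : E × D).1 = 0 := hk
    have h2 : (k : E × D).2 ∈ A := by
      refine ⟨(k : E × D), ⟨k.2, ⟨(k : E × D).2, ?_⟩⟩, rfl⟩
      ext <;> simp [h1]
    simpa [g, Submodule.Quotient.mk_eq_zero] using h2
  let eq := p.quotKerEquivOfSurjective hp
  let f : E →ₗ[R] D ⧸ A := (Submodule.liftQ (LinearMap.ker p) g hker).comp eq.symm.toLinearMap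
  have hf : f = 0 := h A f
  have hg : ∀ k : K, g k = 0 := by
    intro k
    have : g k = f (eq (Submodule.Quotient.mk k)) := by
      simp [f, eq.symm_apply_apply, Submodule.liftQ_apply]
    rw [this, hf]; rfl
  rintro _ ⟨e, rfl⟩
  obtain ⟨k, hk⟩ := hp e
  have hk2 : (k : E × D).2 ∈ A := by
    have := hg k
    simpa [g, Submodule.Quotient.mk_eq_zero] using this
  obtain ⟨x, ⟨hxK, ⟨d, hd⟩⟩, hx2⟩ := hk2
  have hx1 : x.1 = 0 := by rw [← hd]; rfl
  have hx : x = (0, (k : E × D).2) := by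
    ext
    · exact hx1
    · exact hx2
  have hmem : ((k : E × D) - (0, (k : E × D).2)) ∈ K := by
    exact K.sub_mem k.2 (hx ▸ hxK)
  have heq : ((k : E × D) - (0, (k : E × D).2)) = LinearMap.inl R E D e := by
    ext
    · simpa using (show (k : E × D).1 = e from hk)
    · simp
  exact heq ▸ hmem

/-- Let `E` be a simple left `R`-module and `D` any left `R`-module, and consider `E` as
the submodule `E ⊕ 0` of `M = E ⊕ D`.  Then `E` is strongly hollow in `M` iff every
`R`-linear map from `E` to a quotient of `D` is zero (i.e. `E ∉ σ[D]`). -/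
theorem simple_stronglyHollow_iff_not_in_sigma
    {R : Type*} [Ring R] {E D : Type*}
    [AddCommGroup E] [Module R E] [IsSimpleModule R E]
    [AddCommGroup D] [Module R D] :
    (∀ K L : Submodule R (E × D),
        LinearMap.range (LinearMap.inl R E D) ≤ K ⊔ L →
        LinearMap.range (LinearMap.inl R E D) ≤ K ∨
        LinearMap.range (LinearMap.inl R E D) ≤ L) ↔
      ∀ (A : Submodule R D) (f : E →ₗ[R] D ⧸ A), f = 0 := by
  constructor
  · intro hsh A f
    set K := LinearMap.ker ((f.comp (LinearMap.fst R E D)) - (A.mkQ.comp (LinearMap.snd R E D)))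
      with hK
    set L := LinearMap.range (LinearMap.inr R E D) with hL
    have hKL : LinearMap.range (LinearMap.inl R E D) ≤ K ⊔ L := by
      rintro _ ⟨e, rfl⟩
      obtain ⟨d, hd⟩ := Submodule.Quotient.mk_surjective A (f e)
      refine Submodule.mem_sup.2 ⟨(e, d), ?_, (0, -d), ⟨-d, rfl⟩, ?_⟩
      · simp [hK, LinearMap.mem_ker, sub_eq_zero, ← hd]
      · ext <;> simp
    rcases hsh K L hKL with hc | hc
    · ext e
      have he : LinearMap.inl R E D e ∈ K := hc ⟨e, rfl⟩
      simpa [sub_eq_zero] using LinearMap.mem_ker.1 he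
    · ext e
      have he : LinearMap.inl R E D e ∈ L := hc ⟨e, rfl⟩
      obtain ⟨d, hd⟩ := he
      have : e = 0 := by
        have := congrArg Prod.fst hd
        simpa using this.symm
      simp [this]
  · intro h K L hKL
    have hmap : (⊤ : Submodule R E) ≤
        Submodule.map (LinearMap.fst R E D) K ⊔ Submodule.map (LinearMap.fst R E D) L := by
      have h1 : Submodule.map (LinearMap.fst R E D) (LinearMap.range (LinearMap.inl R E D)) =
          ⊤ := by
        rw [← LinearMap.range_comp, LinearMap.fst_comp_inl, LinearMap.range_id]
      calc (⊤ : Submodule R E)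
          = Submodule.map (LinearMap.fst R E D) (LinearMap.range (LinearMap.inl R E D)) :=
            h1.symm
        _ ≤ Submodule.map (LinearMap.fst R E D) (K ⊔ L) := Submodule.map_mono hKL
        _ = _ := Submodule.map_sup _ _ _
    rcases eq_bot_or_eq_top (Submodule.map (LinearMap.fst R E D) K) with hKb | hKt
    · rcases eq_bot_or_eq_top (Submodule.map (LinearMap.fst R E D) L) with hLb | hLt
      · rw [hKb, hLb, sup_bot_eq] at hmap
        exact absurd (top_le_iff.1 hmap).symm top_ne_bot
      · exact Or.inr (aux_inl_le_of_map_fst_top h L hLt)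
    · exact Or.inl (aux_inl_le_of_map_fst_top h K hKt)
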